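/- The covariance of the Horvitz–Thompson estimators for two distinct exposures satisfies Cov(Ŷ, Ẑ) = (1/N²)∑_{i=1}^N ∑_{j≠i} (r_{ij} − p_i q_j)(y_i/p_i)(z_j/q_j) − (1/N²)∑_{i=1}^N y_i z_i. -/

import Mathlib

open MeasureTheory

/-- **Covariance of the Horvitz–Thompson estimators for two distinct exposures.**
`Cov(Ŷ, Ẑ) = (1/N²) ∑ᵢ ∑_{j≠i} (r_{ij} − pᵢ qⱼ)(yᵢ/pᵢ)(zⱼ/qⱼ) − (1/N²) ∑ᵢ yᵢ zᵢ`,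
where `Ŷ = (1/N) ∑ᵢ 1_{Bᵢ} yᵢ/pᵢ`, `Ẑ = (1/N) ∑ᵢ 1_{Cᵢ} zᵢ/qᵢ`,
`pᵢ = P(Bᵢ) > 0`, `qᵢ = P(Cᵢ) > 0`, `r_{ij} = P(Bᵢ ∩ Cⱼ)`, `Bᵢ ∩ Cᵢ = ∅`,
and `Cov(X,Y) = E[XY] − E[X]E[Y]`. -/
theorem horvitz_thompson_covariance
    {Ω : Type*} [MeasurableSpace Ω] (P : Measure Ω) [IsProbabilityMeasure P]
    (N : ℕ) (hN : 0 < N)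
    (B C : Fin N → Set Ω) (hB : ∀ i, MeasurableSet (B i)) (hC : ∀ i, MeasurableSet (C i))
    (hBC : ∀ i, B i ∩ C i = ∅)
    (y z p q : Fin N → ℝ) (r : Fin N → Fin N → ℝ)
    (hp : ∀ i, p i = (P (B i)).toReal) (hppos : ∀ i, 0 < p i)
    (hq : ∀ i, q i = (P (C i)).toReal) (hqpos : ∀ i, 0 < q i)
    (hr : ∀ i j, r i j = (P (B i ∩ C j)).toReal)
    (Yhat Zhat : Ω → ℝ)
    (hY : Yhat = fun ω =>
      (1 / (N : ℝ)) * ∑ i, (B i).indicator (fun _ => (1 : ℝ)) ω * y i / p i)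
    (hZ : Zhat = fun ω =>
      (1 / (N : ℝ)) * ∑ i, (C i).indicator (fun _ => (1 : ℝ)) ω * z i / q i) :
    (∫ ω, Yhat ω * Zhat ω ∂P) - (∫ ω, Yhat ω ∂P) * (∫ ω, Zhat ω ∂P)
      = (1 / (N : ℝ) ^ 2) * ∑ i, ∑ j ∈ Finset.univ.filter (fun j => j ≠ i),
          (r i j - p i * q j) * (y i / p i) * (z j / q j)
        - (1 / (N : ℝ) ^ 2) * ∑ i, y i * z i := by
  have hind : ∀ (s : Set Ω) (c : ℝ) (ω : Ω),
      s.indicator (fun _ => (1:ℝ)) ω * c = s.indicator (fun _ => c) ω := by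
    intro s c ω; by_cases h : ω ∈ s <;> simp [h]
  set a : Fin N → ℝ := fun i => y i / p i with ha
  set b : Fin N → ℝ := fun i => z i / q i with hb
  -- integral of Yhat
  have hYint : ∫ ω, Yhat ω ∂P = (1/(N:ℝ)) * ∑ i, y i := by
    rw [hY]
    simp_rw [mul_div_assoc, hind]
    rw [integral_const_mul, integral_finset_sum _
      (fun i _ => (integrable_const (a i)).indicator (hB i))]
    congr 1
    refine Finset.sum_congr rfl fun i _ => ?_
    rw [integral_indicator_const _ (hB i), smul_eq_mul, measureReal_def, ← hp]
    simp only [ha]; field_simp [(hppos i).ne']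
  have hZint : ∫ ω, Zhat ω ∂P = (1/(N:ℝ)) * ∑ i, z i := by
    rw [hZ]
    simp_rw [mul_div_assoc, hind]
    rw [integral_const_mul, integral_finset_sum _
      (fun i _ => (integrable_const (b i)).indicator (hC i))]
    congr 1
    refine Finset.sum_congr rfl fun i _ => ?_
    rw [integral_indicator_const _ (hC i), smul_eq_mul, measureReal_def, ← hq]
    simp only [hb]; field_simp [(hqpos i).ne']
  -- pointwise product
  have hprod : ∀ ω, Yhat ω * Zhat ω
      = (1/(N:ℝ))^2 * ∑ i, ∑ j, (B i ∩ C j).indicator (fun _ => a i * b j) ω := by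
    intro ω
    rw [hY, hZ]
    simp_rw [mul_div_assoc, hind]
    rw [mul_mul_mul_comm, ← sq, Finset.sum_mul_sum]
    congr 1
    refine Finset.sum_congr rfl fun i _ => Finset.sum_congr rfl fun j _ => ?_
    rw [← Set.inter_indicator_mul]
  have hPint : ∫ ω, Yhat ω * Zhat ω ∂P
      = (1/(N:ℝ))^2 * ∑ i, ∑ j, r i j * (a i * b j) := by
    simp_rw [hprod]
    rw [integral_const_mul, integral_finset_sum _
      (fun i _ => integrable_finset_sum _
        (fun j _ => (integrable_const (a i * b j)).indicator ((hB i).inter (hC j))))]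
    congr 1
    refine Finset.sum_congr rfl fun i _ => ?_
    rw [integral_finset_sum _
      (fun j _ => (integrable_const (a i * b j)).indicator ((hB i).inter (hC j)))]
    refine Finset.sum_congr rfl fun j _ => ?_
    rw [integral_indicator_const _ ((hB i).inter (hC j)), smul_eq_mul, measureReal_def, ← hr]
  have hrii : ∀ i, r i i = 0 := by
    intro i; rw [hr, hBC]; simp
  have hpa : ∀ i, p i * a i = y i := by
    intro i; simp only [ha]; field_simp [(hppos i).ne']
  have hqb : ∀ i, q i * b i = z i := by
    intro i; simp only [hb]; field_simp [(hqpos i).ne']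
  -- rewrite the filtered sum
  have hinner : ∀ i, ∑ j ∈ Finset.univ.filter (fun j => j ≠ i),
      (r i j - p i * q j) * (y i / p i) * (z j / q j)
      = (∑ j, r i j * (a i * b j)) - y i * (∑ j, z j) + y i * z i := by
    intro i
    have : Finset.univ.filter (fun j => j ≠ i) = Finset.univ.erase i := by
      ext j; simp [Finset.mem_erase]
    rw [this, Finset.sum_erase_eq_sub (Finset.mem_univ i)]
    rw [hrii i]
    have h1 : ∀ j, (r i j - p i * q j) * (y i / p i) * (z j / q j)
        = r i j * (a i * b j) - y i * z j := by
      intro j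
      rw [ha, hb]
      field_simp [(hppos i).ne', (hqpos j).ne']
    simp_rw [h1]
    rw [Finset.sum_sub_distrib, ← Finset.mul_sum]
    have h2 : (0 - p i * q i) * (y i / p i) * (z i / q i) = -(y i * z i) := by
      field_simp [(hppos i).ne', (hqpos i).ne']
      ring
    rw [h2]
    ring
  rw [hYint, hZint, hPint]
  simp_rw [hinner]
  rw [Finset.sum_add_distrib, Finset.sum_sub_distrib, ← Finset.sum_mul]
  ring
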